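/- Let G = G₀ *_H G₁ be a nondegenerate free product with amalgamation. Then K₀ = {e} if and only if K₁ = {e}. Moreover, if K₀ = ker G then K₀ = K₁, and likewise if K₁ = ker G then K₀ = K₁. -/

import Mathlib

variable {G : Type*} [Group G]

/-- `AltWord G₀ G₁ H j w`: the list `w` is an alternating word whose `i`-th letter lies in
`G_{(i+j) mod 2} \ H`. -/
def AltWord (G₀ G₁ H : Subgroup G) (j : ℕ) (w : List G) : Prop :=
  ∀ (i : ℕ) (hi : i < w.length),
    w.get ⟨i, hi⟩ ∈ (if (i + j) % 2 = 0 then (G₀ : Set G) else (G₁ : Set G)) \ (H : Set G)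

/-- `G` is the free product of its subgroups `G₀` and `G₁` amalgamated over their common
subgroup `H` (internal characterization: `G₀ ∩ G₁ = H`, the subgroups `G₀` and `G₁` generate
`G`, and no nonempty alternating word with letters in `G₀ \ H` and `G₁ \ H` has product
in `H`). -/
structure IsAmalgam (G₀ G₁ H : Subgroup G) : Prop where
  le_left : H ≤ G₀
  le_right : H ≤ G₁
  inf_eq : G₀ ⊓ G₁ = H
  closure_eq_top : Subgroup.closure ((G₀ : Set G) ∪ (G₁ : Set G)) = ⊤
  reduced : ∀ (j : ℕ) (w : List G), w ≠ [] → AltWord G₀ G₁ H j w → w.prod ∉ H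

/-- The amalgam `G₀ *_H G₁` is *nondegenerate*: `([G₀ : H] − 1) · ([G₁ : H] − 1) ≥ 2`,
i.e. `H` is a proper subgroup of both `G₀` and `G₁`, and has index at least `3` (possibly
infinite) in at least one of them. -/
def Nondegenerate (G₀ G₁ H : Subgroup G) : Prop :=
  H.relIndex G₀ ≠ 1 ∧ H.relIndex G₁ ≠ 1 ∧ ¬(H.relIndex G₀ = 2 ∧ H.relIndex G₁ = 2)

/-- `T_{j,k}`: the set of elements of `G` that are products of alternating words of length
`k` whose first letter lies in `G_j \ H`; by convention `T_{j,0} = H`. -/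
def TT (G₀ G₁ H : Subgroup G) (j k : ℕ) : Set G :=
  if k = 0 then (H : Set G)
  else {g | ∃ w : List G, w.length = k ∧ AltWord G₀ G₁ H j w ∧ w.prod = g}

/-- `C_{j,k} = ⋂_{g ∈ T_{j,k}} g H g⁻¹`. -/
def CC (G₀ G₁ H : Subgroup G) (j k : ℕ) : Set G :=
  ⋂ g ∈ TT G₀ G₁ H j k, {x | g⁻¹ * x * g ∈ H}

/-- `K_j = ⋂_{k ≥ 0} C_{j,k}`. -/
def KK (G₀ G₁ H : Subgroup G) (j : ℕ) : Set G :=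
  ⋂ k : ℕ, CC G₀ G₁ H j k

/-- The kernel of the amalgam, `ker G = ⋂_{g ∈ G} g H g⁻¹`, as a set. -/
def amalgamKerSet (H : Subgroup G) : Set G :=
  ⋂ g : G, {x | g⁻¹ * x * g ∈ H}


lemma one_mem_KK {G : Type*} [Group G] (G₀ G₁ H : Subgroup G) (j : ℕ) :
    (1 : G) ∈ KK G₀ G₁ H j := by
  simp only [KK, CC, Set.mem_iInter]
  intro k t ht
  simp [Set.mem_setOf_eq, one_mem]

lemma ker_subset_KK {G : Type*} [Group G] (G₀ G₁ H : Subgroup G) (j : ℕ) :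
    amalgamKerSet H ⊆ KK G₀ G₁ H j := by
  intro x hx
  simp only [amalgamKerSet, Set.mem_iInter] at hx
  simp only [KK, CC, Set.mem_iInter]
  intro k t ht
  exact hx t

lemma key_aux {G : Type*} [Group G] (G₀ G₁ H : Subgroup G) (hH : H ≤ G₁)
    {b : G} (hb : b ∈ G₁) (hbH : b ∉ H) {x : G} (hx : x ∈ KK G₀ G₁ H 1) :
    b * x * b⁻¹ ∈ KK G₀ G₁ H 0 := by
  simp only [KK, CC, Set.mem_iInter] at hx ⊢
  intro k t ht
  have hmem : b⁻¹ * t ∈ TT G₀ G₁ H 1 (k + 1) := by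
    rcases Nat.eq_zero_or_pos k with hk | hk
    · subst hk
      have htH : t ∈ (H : Set G) := by simpa [TT] using ht
      rw [TT, if_neg (Nat.succ_ne_zero 0)]
      refine ⟨[b⁻¹ * t], rfl, ?_, by simp⟩
      intro i hi
      have hi0 : i = 0 := by simpa using Nat.lt_one_iff.mp (by simpa using hi)
      subst hi0
      have hgoal : b⁻¹ * t ∈ (↑G₁ : Set G) \ ↑H := by
        refine ⟨mul_mem (inv_mem hb) (hH htH), fun hmem => hbH ?_⟩
        have : (b⁻¹ * t) * t⁻¹ ∈ H := mul_mem hmem (inv_mem htH)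
        simpa using inv_mem this
      simpa using hgoal
    · have hk' : k ≠ 0 := hk.ne'
      rw [TT, if_neg hk'] at ht
      obtain ⟨w, hlen, halt, hprod⟩ := ht
      rw [TT, if_neg (Nat.succ_ne_zero k)]
      refine ⟨b⁻¹ :: w, by simp [hlen], ?_, by rw [List.prod_cons, hprod]⟩
      intro i hi
      match i with
      | 0 =>
        have hgoal : b⁻¹ ∈ (↑G₁ : Set G) \ ↑H :=
          ⟨inv_mem hb, fun hmem => hbH (by simpa using inv_mem hmem)⟩
        simpa using hgoal
      | Nat.succ i =>
        have hi' : i < w.length := by simpa using Nat.lt_of_succ_lt_succ (by simpa using hi)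
        have := halt i hi'
        have hpar : (i + 1 + 1) % 2 = (i + 0) % 2 := by omega
        simp only [List.get, hpar]
        exact this
  have h1 := hx (k + 1) (b⁻¹ * t) hmem
  simp only [Set.mem_setOf_eq] at h1 ⊢
  have heq : t⁻¹ * (b * x * b⁻¹) * t = (b⁻¹ * t)⁻¹ * x * (b⁻¹ * t) := by group
  rw [heq]; exact h1

lemma key_aux' {G : Type*} [Group G] (G₀ G₁ H : Subgroup G) (hH : H ≤ G₀)
    {a : G} (ha : a ∈ G₀) (haH : a ∉ H) {x : G} (hx : x ∈ KK G₀ G₁ H 0) :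
    a * x * a⁻¹ ∈ KK G₀ G₁ H 1 := by
  simp only [KK, CC, Set.mem_iInter] at hx ⊢
  intro k t ht
  have hmem : a⁻¹ * t ∈ TT G₀ G₁ H 0 (k + 1) := by
    rcases Nat.eq_zero_or_pos k with hk | hk
    · subst hk
      have htH : t ∈ (H : Set G) := by simpa [TT] using ht
      rw [TT, if_neg (Nat.succ_ne_zero 0)]
      refine ⟨[a⁻¹ * t], rfl, ?_, by simp⟩
      intro i hi
      have hi0 : i = 0 := by simpa using Nat.lt_one_iff.mp (by simpa using hi)
      subst hi0
      have hgoal : a⁻¹ * t ∈ (↑G₀ : Set G) \ ↑H := by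
        refine ⟨mul_mem (inv_mem ha) (hH htH), fun hmem => haH ?_⟩
        have : (a⁻¹ * t) * t⁻¹ ∈ H := mul_mem hmem (inv_mem htH)
        simpa using inv_mem this
      simpa using hgoal
    · have hk' : k ≠ 0 := hk.ne'
      rw [TT, if_neg hk'] at ht
      obtain ⟨w, hlen, halt, hprod⟩ := ht
      rw [TT, if_neg (Nat.succ_ne_zero k)]
      refine ⟨a⁻¹ :: w, by simp [hlen], ?_, by rw [List.prod_cons, hprod]⟩
      intro i hi
      match i with
      | 0 =>
        have hgoal : a⁻¹ ∈ (↑G₀ : Set G) \ ↑H :=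
          ⟨inv_mem ha, fun hmem => haH (by simpa using inv_mem hmem)⟩
        simpa using hgoal
      | Nat.succ i =>
        have hi' : i < w.length := by simpa using Nat.lt_of_succ_lt_succ (by simpa using hi)
        have := halt i hi'
        have hpar : (i + 1 + 0) % 2 = (i + 1) % 2 := by omega
        simp only [List.get, hpar]
        exact this
  have h1 := hx (k + 1) (a⁻¹ * t) hmem
  simp only [Set.mem_setOf_eq] at h1 ⊢
  have heq : t⁻¹ * (a * x * a⁻¹) * t = (a⁻¹ * t)⁻¹ * x * (a⁻¹ * t) := by group
  rw [heq]; exact h1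

/-- Let `G = G₀ *_H G₁` be a nondegenerate free product with amalgamation. Then
`K₀ = {e}` if and only if `K₁ = {e}`. Moreover, if `K₀ = ker G` then `K₀ = K₁`, and
likewise if `K₁ = ker G` then `K₀ = K₁`. -/
theorem K_triviality_and_ker {G : Type*} [Group G] (G₀ G₁ H : Subgroup G)
    (ha : IsAmalgam G₀ G₁ H) (hnd : Nondegenerate G₀ G₁ H) :
    (KK G₀ G₁ H 0 = {1} ↔ KK G₀ G₁ H 1 = {1}) ∧
    (KK G₀ G₁ H 0 = amalgamKerSet H → KK G₀ G₁ H 0 = KK G₀ G₁ H 1) ∧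
    (KK G₀ G₁ H 1 = amalgamKerSet H → KK G₀ G₁ H 0 = KK G₀ G₁ H 1) := by
  obtain ⟨a, haG, haH⟩ : ∃ a, a ∈ G₀ ∧ a ∉ H := by
    by_contra h
    push_neg at h
    exact hnd.1 (Subgroup.relIndex_eq_one.mpr h)
  obtain ⟨b, hbG, hbH⟩ : ∃ b, b ∈ G₁ ∧ b ∉ H := by
    by_contra h
    push_neg at h
    exact hnd.2.1 (Subgroup.relIndex_eq_one.mpr h)
  refine ⟨⟨fun h0 => ?_, fun h1 => ?_⟩, fun h0 => ?_, fun h1 => ?_⟩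
  · refine subset_antisymm (fun x hx => ?_) (by simp [one_mem_KK])
    have hc := key_aux G₀ G₁ H ha.le_right hbG hbH hx
    rw [h0, Set.mem_singleton_iff] at hc
    have : x = b⁻¹ * (b * x * b⁻¹) * b := by group
    rw [hc] at this
    simpa using this
  · refine subset_antisymm (fun x hx => ?_) (by simp [one_mem_KK])
    have hc := key_aux' G₀ G₁ H ha.le_left haG haH hx
    rw [h1, Set.mem_singleton_iff] at hc
    have : x = a⁻¹ * (a * x * a⁻¹) * a := by group
    rw [hc] at this
    simpa using this
  · have h01 : KK G₀ G₁ H 0 ⊆ KK G₀ G₁ H 1 := by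
      rw [h0]; exact ker_subset_KK G₀ G₁ H 1
    refine subset_antisymm h01 (fun x hx => ?_)
    have hb' : b⁻¹ ∉ H := fun hmem => hbH (by simpa using inv_mem hmem)
    have h1 : b⁻¹ * x * b⁻¹⁻¹ ∈ KK G₀ G₁ H 0 :=
      key_aux G₀ G₁ H ha.le_right (inv_mem hbG) hb' hx
    have h2 := key_aux G₀ G₁ H ha.le_right hbG hbH (h01 h1)
    have heq : b * (b⁻¹ * x * b⁻¹⁻¹) * b⁻¹ = x := by group
    rwa [heq] at h2
  · have h10 : KK G₀ G₁ H 1 ⊆ KK G₀ G₁ H 0 := by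
      rw [h1]; exact ker_subset_KK G₀ G₁ H 0
    refine subset_antisymm (fun x hx => ?_) h10
    have ha' : a⁻¹ ∉ H := fun hmem => haH (by simpa using inv_mem hmem)
    have h1' : a⁻¹ * x * a⁻¹⁻¹ ∈ KK G₀ G₁ H 1 :=
      key_aux' G₀ G₁ H ha.le_left (inv_mem haG) ha' hx
    have h2 := key_aux' G₀ G₁ H ha.le_left haG haH (h10 h1')
    have heq : a * (a⁻¹ * x * a⁻¹⁻¹) * a⁻¹ = x := by group
    rwa [heq] at h2
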